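/- arXiv:1406.5044 — 2 statements merged into one kernel-verified Lean document; each statement's English description precedes it below -/
import Mathlib

section
/- The quotient ring C[z1,z2]/⟨(z1+z2)², z1²+z2²−2⟩ is a 4-dimensional C-vector space with basis represented by the monomials {1, z1, z2, z2²}. -/
open MvPolynomial

noncomputable section Stmt8Aux

def f4 : Polynomial ℂ := Polynomial.X ^ 4 - 2 * Polynomial.X ^ 2 + 1

lemma f4_monic : f4.Monic := by unfold f4; monicity!

lemma f4_natDegree : f4.natDegree = 4 := by unfold f4; compute_degree!

lemma f4_ne_zero : f4 ≠ 0 := f4_monic.ne_zero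

def J : Ideal (MvPolynomial (Fin 2) ℂ) :=
  Ideal.span {(X 0 + X 1) ^ 2, X 0 ^ 2 + X 1 ^ 2 - 2}

local notation "r" => AdjoinRoot.root f4

lemma root_rel : r ^ 4 - 2 * r ^ 2 + 1 = 0 := by
  have h := AdjoinRoot.mk_self (f := f4)
  rw [f4] at h
  simp only [map_add, map_sub, map_mul, map_pow, map_ofNat, map_one, AdjoinRoot.mk_X] at h
  exact h

def w : Fin 2 → AdjoinRoot f4 := ![r ^ 3 - 2 * r, r]

def φ0 : MvPolynomial (Fin 2) ℂ →ₐ[ℂ] AdjoinRoot f4 := aeval w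

lemma hker : ∀ a ∈ J, φ0 a = 0 := by
  intro a ha
  have hle : J ≤ RingHom.ker φ0.toRingHom := by
    rw [J, Ideal.span_le]
    rintro p hp
    simp only [Set.mem_insert_iff, Set.mem_singleton_iff] at hp
    rcases hp with rfl | rfl <;>
      simp only [SetLike.mem_coe, RingHom.mem_ker, AlgHom.toRingHom_eq_coe,
        RingHom.coe_coe, φ0, map_add, map_sub, map_pow, map_mul, map_ofNat, aeval_X, w] <;>
      simp only [Matrix.cons_val_zero, Matrix.cons_val_one, Matrix.head_cons] <;>
      [linear_combination (r^2 : AdjoinRoot f4) * root_rel;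
       linear_combination ((r:AdjoinRoot f4)^2 - 2) * root_rel]
  exact (RingHom.mem_ker).mp (hle ha)

def φ : (MvPolynomial (Fin 2) ℂ ⧸ J) →ₐ[ℂ] AdjoinRoot f4 := Ideal.Quotient.liftₐ J φ0 hker


lemma g1_mem : ((X 0 + X 1) ^ 2 : MvPolynomial (Fin 2) ℂ) ∈ J :=
  Ideal.subset_span (Set.mem_insert _ _)

lemma g2_mem : (X 0 ^ 2 + X 1 ^ 2 - 2 : MvPolynomial (Fin 2) ℂ) ∈ J :=
  Ideal.subset_span (Set.mem_insert_of_mem _ rfl)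

lemma mem_of_two_mul {x : MvPolynomial (Fin 2) ℂ} (h : 2 * x ∈ J) : x ∈ J := by
  have h2 : (C (2⁻¹ : ℂ) : MvPolynomial (Fin 2) ℂ) * (2 * x) ∈ J := J.mul_mem_left _ h
  have he : (C (2⁻¹ : ℂ) : MvPolynomial (Fin 2) ℂ) * (2 * x) = x := by
    rw [← mul_assoc, show ((2 : MvPolynomial (Fin 2) ℂ)) = C (2:ℂ) from (map_ofNat C 2).symm,
      ← C_mul]
    norm_num
  rwa [he] at h2

lemma mem1 : ((X 1) ^ 4 - 2 * (X 1) ^ 2 + 1 : MvPolynomial (Fin 2) ℂ) ∈ J := by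
  apply mem_of_two_mul
  have : (2 * ((X 1) ^ 4 - 2 * (X 1) ^ 2 + 1) : MvPolynomial (Fin 2) ℂ) =
      (1 - X 0 * X 1) * ((X 0 + X 1) ^ 2) +
      (2 * (X 1) ^ 2 + X 0 * X 1 - 1) * (X 0 ^ 2 + X 1 ^ 2 - 2) := by ring
  rw [this]
  exact J.add_mem (J.mul_mem_left _ g1_mem) (J.mul_mem_left _ g2_mem)

lemma mem2 : ((X 1) ^ 3 - 2 * (X 1) - X 0 : MvPolynomial (Fin 2) ℂ) ∈ J := by
  apply mem_of_two_mul
  have : (2 * ((X 1) ^ 3 - 2 * (X 1) - X 0) : MvPolynomial (Fin 2) ℂ) =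
      (- X 0) * ((X 0 + X 1) ^ 2) + (2 * X 1 + X 0) * (X 0 ^ 2 + X 1 ^ 2 - 2) := by ring
  rw [this]
  exact J.add_mem (J.mul_mem_left _ g1_mem) (J.mul_mem_left _ g2_mem)

lemma haroot : Polynomial.aeval (Ideal.Quotient.mk J (X 1)) f4 = 0 := by
  have h := Ideal.Quotient.eq_zero_iff_mem.mpr mem1
  rw [f4]
  simp only [map_add, map_sub, map_mul, map_pow, map_ofNat, map_one, Polynomial.aeval_X] at h ⊢
  linear_combination h

lemma φ_mk (p : MvPolynomial (Fin 2) ℂ) : φ (Ideal.Quotient.mk J p) = φ0 p := by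
  simp only [φ, Ideal.Quotient.liftₐ_apply]
  erw [Ideal.Quotient.lift_mk]

def ψ : AdjoinRoot f4 →ₐ[ℂ] (MvPolynomial (Fin 2) ℂ ⧸ J) :=
  AdjoinRoot.liftAlgHom f4 (Algebra.ofId ℂ _) (Ideal.Quotient.mk J (X 1)) haroot

lemma ψ_root : ψ r = Ideal.Quotient.mk J (X 1) := AdjoinRoot.liftAlgHom_root _ _ _ _

lemma hφψ : φ.comp ψ = AlgHom.id ℂ (AdjoinRoot f4) := by
  apply AdjoinRoot.algHom_ext
  simp [ψ_root, φ_mk, φ0, w]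

lemma hψφ : ψ.comp φ = AlgHom.id ℂ (MvPolynomial (Fin 2) ℂ ⧸ J) := by
  apply Ideal.Quotient.algHom_ext
  apply MvPolynomial.algHom_ext
  intro i
  have h2 := (Ideal.Quotient.eq (I := J) (x := (X 1) ^ 3 - 2 * (X 1)) (y := X 0)).mpr mem2
  simp only [map_sub, map_mul, map_pow, map_ofNat] at h2
  fin_cases i <;>
    simp only [AlgHom.comp_apply, Ideal.Quotient.mkₐ_eq_mk, AlgHom.coe_id, id_eq,
      Fin.zero_eta, Fin.mk_one, Fin.isValue, Ideal.Quotient.liftₐ_apply,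
      Ideal.Quotient.lift_mk, AlgHom.coe_toRingHom, φ0, aeval_X, w,
      Matrix.cons_val_zero, Matrix.cons_val_one, Matrix.head_cons,
      map_sub, map_mul, map_pow, map_ofNat, ψ_root, φ_mk]
  linear_combination h2

def e : (MvPolynomial (Fin 2) ℂ ⧸ J) ≃ₐ[ℂ] AdjoinRoot f4 := AlgEquiv.ofAlgHom φ ψ hφψ hψφ


lemma finrank_adjoin : Module.finrank ℂ (AdjoinRoot f4) = 4 := by
  rw [(AdjoinRoot.powerBasis f4_ne_zero).finrank, AdjoinRoot.powerBasis_dim, f4_natDegree]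

lemma finrank_quot : Module.finrank ℂ (MvPolynomial (Fin 2) ℂ ⧸ J) = 4 := by
  rw [e.toLinearEquiv.finrank_eq, finrank_adjoin]

def v : Fin 4 → (MvPolynomial (Fin 2) ℂ ⧸ J) :=
  ![1, Ideal.Quotient.mk J (X 0), Ideal.Quotient.mk J (X 1), Ideal.Quotient.mk J ((X 1) ^ 2)]

lemma hdim : (AdjoinRoot.powerBasis f4_ne_zero).dim = 4 := by
  rw [AdjoinRoot.powerBasis_dim, f4_natDegree]

lemma hw_eq : ⇑e.toLinearMap ∘ v = ![1, r ^ 3 - 2 * r, r, r ^ 2] := by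
  funext i
  fin_cases i <;>
    simp [v, e, φ_mk, φ0, w]

lemma hv_li : LinearIndependent ℂ v := by
  apply LinearIndependent.of_comp e.toLinearMap
  rw [hw_eq, Fintype.linearIndependent_iff]
  intro g hg
  have hb := Fintype.linearIndependent_iff.mp
    (((AdjoinRoot.powerBasis f4_ne_zero).basis.reindex (finCongr hdim)).linearIndependent)
    ![g 0, g 2 - 2 * g 1, g 3, g 1] ?_
  · intro i
    fin_cases i
    · simpa using hb 0
    · simpa using hb 3
    · have h1 := hb 1
      have h3 := hb 3
      simp only [Matrix.cons_val_one, Matrix.head_cons, Matrix.cons_val_three,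
        Matrix.tail_cons, Matrix.cons_val_zero] at h1 h3
      show g 2 = 0
      linear_combination h1 + 2 * h3
    · simpa using hb 2
  · have basis4 : ∀ i : Fin 4,
        ((AdjoinRoot.powerBasis f4_ne_zero).basis.reindex (finCongr hdim)) i =
          (![1, r, r ^ 2, r ^ 3] : Fin 4 → AdjoinRoot f4) i := by
      intro i
      fin_cases i <;>
        rw [Module.Basis.reindex_apply, (AdjoinRoot.powerBasis f4_ne_zero).basis_eq_pow] <;>
        norm_num [AdjoinRoot.powerBasis_gen, Fin.val_ofNat]
    simp only [basis4]
    rw [Fin.sum_univ_four] at hg ⊢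
    simp only [Matrix.cons_val_zero, Matrix.cons_val_one, Matrix.head_cons,
      Matrix.cons_val_two, Matrix.tail_cons, Matrix.cons_val_three,
      Algebra.smul_def, map_sub, map_mul, map_ofNat] at hg ⊢
    linear_combination hg

lemma card_eq : Fintype.card (Fin 4) = Module.finrank ℂ (MvPolynomial (Fin 2) ℂ ⧸ J) := by
  simp [finrank_quot]

def B : Module.Basis (Fin 4) ℂ (MvPolynomial (Fin 2) ℂ ⧸ J) :=
  basisOfLinearIndependentOfCardEqFinrank hv_li card_eq

lemma B_apply (i : Fin 4) : B i = v i := by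
  rw [B, coe_basisOfLinearIndependentOfCardEqFinrank]

end Stmt8Aux

open MvPolynomial in
/-- The quotient ring ℂ[z1,z2]/⟨(z1+z2)², z1²+z2²−2⟩ is a 4-dimensional ℂ-vector space
with basis given by (the images of) the monomials {1, z1, z2, z2²}. -/
theorem stmt_8 :
    ∀ I : Ideal (MvPolynomial (Fin 2) ℂ),
      I = Ideal.span {(X 0 + X 1) ^ 2, X 0 ^ 2 + X 1 ^ 2 - 2} →
      Module.finrank ℂ (MvPolynomial (Fin 2) ℂ ⧸ I) = 4 ∧
      ∃ B : Module.Basis (Fin 4) ℂ (MvPolynomial (Fin 2) ℂ ⧸ I),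
        B 0 = Ideal.Quotient.mk I 1 ∧
        B 1 = Ideal.Quotient.mk I (X 0) ∧
        B 2 = Ideal.Quotient.mk I (X 1) ∧
        B 3 = Ideal.Quotient.mk I ((X 1) ^ 2) := by
  intro I hI
  subst hI
  exact ⟨finrank_quot, B, (B_apply 0).trans (by simp [v, J]; rfl),
    (B_apply 1).trans (by simp [v, J]; rfl), (B_apply 2).trans (by simp [v, J]; rfl),
    (B_apply 3).trans (by simp [v, J]; rfl)⟩
end

section
/- Let R1, R2 ∈ C^{10} be given by R1 = (−1, −t, 1, t, t, −1, −t, 1, t, t) and R2 = N(0,1,0,−1,−1,0,1,0,−1,−1) with t = χ s/(m² − (1+χ)s) and N = χ s²/(2(m² − (1+χ)s)), assuming t ≠ 0 and N ≠ 0. Then there exist unique vectors M1, M2 in the 2-dimensional space of weight vectors satisfying the eight contour constraints (ω_i = ω_{i+5} for i = 1..5; Ω·(0,1,0,1,0,0,1,0,1,0)=0; Ω·(1,−1,1,−1,0,1,−1,1,−1,0)=0; Ω·(1,1,−1,−1,2,1,1,−1,−1,2)=0) such that M1·R1 = 1, M1·R2 = 0, M2·R1 = 0, M2·R2 = 1.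 -/
private lemma sum_univ_ten' {β : Type*} [AddCommMonoid β] (f : Fin 10 → β) :
    ∑ i, f i = f 0 + f 1 + f 2 + f 3 + f 4 + f 5 + f 6 + f 7 + f 8 + f 9 := by
  rw [Fin.sum_univ_castSucc, Fin.sum_univ_castSucc, Fin.sum_univ_eight]
  rfl

private lemma c10_0 {α : Type*} (a0 a1 a2 a3 a4 a5 a6 a7 a8 a9 : α) : ![a0,a1,a2,a3,a4,a5,a6,a7,a8,a9] (0 : Fin 10) = a0 := rfl
private lemma c10_1 {α : Type*} (a0 a1 a2 a3 a4 a5 a6 a7 a8 a9 : α) : ![a0,a1,a2,a3,a4,a5,a6,a7,a8,a9] (1 : Fin 10) = a1 := rfl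
private lemma c10_2 {α : Type*} (a0 a1 a2 a3 a4 a5 a6 a7 a8 a9 : α) : ![a0,a1,a2,a3,a4,a5,a6,a7,a8,a9] (2 : Fin 10) = a2 := rfl
private lemma c10_3 {α : Type*} (a0 a1 a2 a3 a4 a5 a6 a7 a8 a9 : α) : ![a0,a1,a2,a3,a4,a5,a6,a7,a8,a9] (3 : Fin 10) = a3 := rfl
private lemma c10_4 {α : Type*} (a0 a1 a2 a3 a4 a5 a6 a7 a8 a9 : α) : ![a0,a1,a2,a3,a4,a5,a6,a7,a8,a9] (4 : Fin 10) = a4 := rfl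
private lemma c10_5 {α : Type*} (a0 a1 a2 a3 a4 a5 a6 a7 a8 a9 : α) : ![a0,a1,a2,a3,a4,a5,a6,a7,a8,a9] (5 : Fin 10) = a5 := rfl
private lemma c10_6 {α : Type*} (a0 a1 a2 a3 a4 a5 a6 a7 a8 a9 : α) : ![a0,a1,a2,a3,a4,a5,a6,a7,a8,a9] (6 : Fin 10) = a6 := rfl
private lemma c10_7 {α : Type*} (a0 a1 a2 a3 a4 a5 a6 a7 a8 a9 : α) : ![a0,a1,a2,a3,a4,a5,a6,a7,a8,a9] (7 : Fin 10) = a7 := rfl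
private lemma c10_8 {α : Type*} (a0 a1 a2 a3 a4 a5 a6 a7 a8 a9 : α) : ![a0,a1,a2,a3,a4,a5,a6,a7,a8,a9] (8 : Fin 10) = a8 := rfl
private lemma c10_9 {α : Type*} (a0 a1 a2 a3 a4 a5 a6 a7 a8 a9 : α) : ![a0,a1,a2,a3,a4,a5,a6,a7,a8,a9] (9 : Fin 10) = a9 := rfl
private lemma c10m_0 {α : Type*} (a0 a1 a2 a3 a4 a5 a6 a7 a8 a9 : α) (h : (0:ℕ) < 10) : ![a0,a1,a2,a3,a4,a5,a6,a7,a8,a9] (⟨0, h⟩ : Fin 10) = a0 := rfl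
private lemma c10m_1 {α : Type*} (a0 a1 a2 a3 a4 a5 a6 a7 a8 a9 : α) (h : (1:ℕ) < 10) : ![a0,a1,a2,a3,a4,a5,a6,a7,a8,a9] (⟨1, h⟩ : Fin 10) = a1 := rfl
private lemma c10m_2 {α : Type*} (a0 a1 a2 a3 a4 a5 a6 a7 a8 a9 : α) (h : (2:ℕ) < 10) : ![a0,a1,a2,a3,a4,a5,a6,a7,a8,a9] (⟨2, h⟩ : Fin 10) = a2 := rfl
private lemma c10m_3 {α : Type*} (a0 a1 a2 a3 a4 a5 a6 a7 a8 a9 : α) (h : (3:ℕ) < 10) : ![a0,a1,a2,a3,a4,a5,a6,a7,a8,a9] (⟨3, h⟩ : Fin 10) = a3 := rfl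
private lemma c10m_4 {α : Type*} (a0 a1 a2 a3 a4 a5 a6 a7 a8 a9 : α) (h : (4:ℕ) < 10) : ![a0,a1,a2,a3,a4,a5,a6,a7,a8,a9] (⟨4, h⟩ : Fin 10) = a4 := rfl
private lemma c10m_5 {α : Type*} (a0 a1 a2 a3 a4 a5 a6 a7 a8 a9 : α) (h : (5:ℕ) < 10) : ![a0,a1,a2,a3,a4,a5,a6,a7,a8,a9] (⟨5, h⟩ : Fin 10) = a5 := rfl
private lemma c10m_6 {α : Type*} (a0 a1 a2 a3 a4 a5 a6 a7 a8 a9 : α) (h : (6:ℕ) < 10) : ![a0,a1,a2,a3,a4,a5,a6,a7,a8,a9] (⟨6, h⟩ : Fin 10) = a6 := rfl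
private lemma c10m_7 {α : Type*} (a0 a1 a2 a3 a4 a5 a6 a7 a8 a9 : α) (h : (7:ℕ) < 10) : ![a0,a1,a2,a3,a4,a5,a6,a7,a8,a9] (⟨7, h⟩ : Fin 10) = a7 := rfl
private lemma c10m_8 {α : Type*} (a0 a1 a2 a3 a4 a5 a6 a7 a8 a9 : α) (h : (8:ℕ) < 10) : ![a0,a1,a2,a3,a4,a5,a6,a7,a8,a9] (⟨8, h⟩ : Fin 10) = a8 := rfl
private lemma c10m_9 {α : Type*} (a0 a1 a2 a3 a4 a5 a6 a7 a8 a9 : α) (h : (9:ℕ) < 10) : ![a0,a1,a2,a3,a4,a5,a6,a7,a8,a9] (⟨9, h⟩ : Fin 10) = a9 := rfl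
private lemma c8_0 {α : Type*} (a0 a1 a2 a3 a4 a5 a6 a7 : α) : ![a0,a1,a2,a3,a4,a5,a6,a7] (0 : Fin 8) = a0 := rfl
private lemma c8_1 {α : Type*} (a0 a1 a2 a3 a4 a5 a6 a7 : α) : ![a0,a1,a2,a3,a4,a5,a6,a7] (1 : Fin 8) = a1 := rfl
private lemma c8_2 {α : Type*} (a0 a1 a2 a3 a4 a5 a6 a7 : α) : ![a0,a1,a2,a3,a4,a5,a6,a7] (2 : Fin 8) = a2 := rfl
private lemma c8_3 {α : Type*} (a0 a1 a2 a3 a4 a5 a6 a7 : α) : ![a0,a1,a2,a3,a4,a5,a6,a7] (3 : Fin 8) = a3 := rfl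
private lemma c8_4 {α : Type*} (a0 a1 a2 a3 a4 a5 a6 a7 : α) : ![a0,a1,a2,a3,a4,a5,a6,a7] (4 : Fin 8) = a4 := rfl
private lemma c8_5 {α : Type*} (a0 a1 a2 a3 a4 a5 a6 a7 : α) : ![a0,a1,a2,a3,a4,a5,a6,a7] (5 : Fin 8) = a5 := rfl
private lemma c8_6 {α : Type*} (a0 a1 a2 a3 a4 a5 a6 a7 : α) : ![a0,a1,a2,a3,a4,a5,a6,a7] (6 : Fin 8) = a6 := rfl
private lemma c8_7 {α : Type*} (a0 a1 a2 a3 a4 a5 a6 a7 : α) : ![a0,a1,a2,a3,a4,a5,a6,a7] (7 : Fin 8) = a7 := rfl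
private lemma c8m_0 {α : Type*} (a0 a1 a2 a3 a4 a5 a6 a7 : α) (h : (0:ℕ) < 8) : ![a0,a1,a2,a3,a4,a5,a6,a7] (⟨0, h⟩ : Fin 8) = a0 := rfl
private lemma c8m_1 {α : Type*} (a0 a1 a2 a3 a4 a5 a6 a7 : α) (h : (1:ℕ) < 8) : ![a0,a1,a2,a3,a4,a5,a6,a7] (⟨1, h⟩ : Fin 8) = a1 := rfl
private lemma c8m_2 {α : Type*} (a0 a1 a2 a3 a4 a5 a6 a7 : α) (h : (2:ℕ) < 8) : ![a0,a1,a2,a3,a4,a5,a6,a7] (⟨2, h⟩ : Fin 8) = a2 := rfl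
private lemma c8m_3 {α : Type*} (a0 a1 a2 a3 a4 a5 a6 a7 : α) (h : (3:ℕ) < 8) : ![a0,a1,a2,a3,a4,a5,a6,a7] (⟨3, h⟩ : Fin 8) = a3 := rfl
private lemma c8m_4 {α : Type*} (a0 a1 a2 a3 a4 a5 a6 a7 : α) (h : (4:ℕ) < 8) : ![a0,a1,a2,a3,a4,a5,a6,a7] (⟨4, h⟩ : Fin 8) = a4 := rfl
private lemma c8m_5 {α : Type*} (a0 a1 a2 a3 a4 a5 a6 a7 : α) (h : (5:ℕ) < 8) : ![a0,a1,a2,a3,a4,a5,a6,a7] (⟨5, h⟩ : Fin 8) = a5 := rfl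
private lemma c8m_6 {α : Type*} (a0 a1 a2 a3 a4 a5 a6 a7 : α) (h : (6:ℕ) < 8) : ![a0,a1,a2,a3,a4,a5,a6,a7] (⟨6, h⟩ : Fin 8) = a6 := rfl
private lemma c8m_7 {α : Type*} (a0 a1 a2 a3 a4 a5 a6 a7 : α) (h : (7:ℕ) < 8) : ![a0,a1,a2,a3,a4,a5,a6,a7] (⟨7, h⟩ : Fin 8) = a7 := rfl

private lemma mv_apply (A : Matrix (Fin 8) (Fin 10) ℂ) (y : Fin 10 → ℂ) (i : Fin 8) :
    A.mulVec y i = A i 0 * y 0 + A i 1 * y 1 + A i 2 * y 2 + A i 3 * y 3 + A i 4 * y 4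
      + A i 5 * y 5 + A i 6 * y 6 + A i 7 * y 7 + A i 8 * y 8 + A i 9 * y 9 := by
  simp [Matrix.mulVec, dotProduct, sum_univ_ten']

section
set_option maxHeartbeats 1000000

private lemma keyA (t N : ℂ) (hN : N ≠ 0) :
    ∃! y : Fin 10 → ℂ,
      (!![1,0,0,0,0,-1,0,0,0,0; 0,1,0,0,0,0,-1,0,0,0; 0,0,1,0,0,0,0,-1,0,0;
          0,0,0,1,0,0,0,0,-1,0; 0,0,0,0,1,0,0,0,0,-1; 0,1,0,1,0,0,1,0,1,0;
          1,-1,1,-1,0,1,-1,1,-1,0; 1,1,-1,-1,2,1,1,-1,-1,2] :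
          Matrix (Fin 8) (Fin 10) ℂ).mulVec y = 0 ∧
      (∑ i, y i * (![-1,-t,1,t,t,-1,-t,1,t,t] : Fin 10 → ℂ) i) = 1 ∧
      (∑ i, y i * (N * (![0,1,0,-1,-1,0,1,0,-1,-1] : Fin 10 → ℂ) i)) = 0 := by
  refine ⟨![-(1/4), 1/12, 1/4, -(1/12), 1/6, -(1/4), 1/12, 1/4, -(1/12), 1/6], ⟨?_, ?_, ?_⟩, ?_⟩
  · funext i
    rw [mv_apply]
    fin_cases i <;>
      · simp only [Matrix.of_apply, c8_0, c8_1, c8_2, c8_3, c8_4, c8_5, c8_6, c8_7,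
          c8m_0, c8m_1, c8m_2, c8m_3, c8m_4, c8m_5, c8m_6, c8m_7,
          c10_0, c10_1, c10_2, c10_3, c10_4, c10_5, c10_6, c10_7, c10_8, c10_9, Pi.zero_apply]
        ring
  · rw [sum_univ_ten']
    simp only [c10_0, c10_1, c10_2, c10_3, c10_4, c10_5, c10_6, c10_7, c10_8, c10_9]
    ring
  · rw [sum_univ_ten']
    simp only [c10_0, c10_1, c10_2, c10_3, c10_4, c10_5, c10_6, c10_7, c10_8, c10_9]
    ring
  · rintro y ⟨hM, hd1, hd2⟩
    have h0 := congrFun hM 0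
    have h1 := congrFun hM 1
    have h2 := congrFun hM 2
    have h3 := congrFun hM 3
    have h4 := congrFun hM 4
    have h5 := congrFun hM 5
    have h6 := congrFun hM 6
    have h7 := congrFun hM 7
    rw [mv_apply] at h0 h1 h2 h3 h4 h5 h6 h7
    simp only [Matrix.of_apply, c8_0, c8_1, c8_2, c8_3, c8_4, c8_5, c8_6, c8_7,
      c10_0, c10_1, c10_2, c10_3, c10_4, c10_5, c10_6, c10_7, c10_8, c10_9,
      Pi.zero_apply] at h0 h1 h2 h3 h4 h5 h6 h7
    rw [sum_univ_ten'] at hd1 hd2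
    simp only [c10_0, c10_1, c10_2, c10_3, c10_4, c10_5, c10_6, c10_7, c10_8, c10_9] at hd1 hd2
    have A : y 1 + y 3 = 0 := by linear_combination (h5 + h1 + h3) / 2
    have B : y 0 + y 2 = 0 := by linear_combination (h6 + h0 + h2 - h1 - h3) / 2 + A
    have C : y 0 + y 1 + y 4 = 0 := by
      linear_combination (h7 + h0 + h1 - h2 - h3 + 2*h4 + 2*A + 2*B) / 4
    have G1 : (2 + t) * y 0 + 3 * t * y 1 = -(1:ℂ)/2 := by
      linear_combination (-hd1 + h0 + t*h1 - h2 - t*h3 - t*h4 + 2*B + 2*t*A + 2*t*C) / 2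
    have G2 : 2 * N * (y 0 + 3 * y 1) = 0 := by
      linear_combination hd2 + N*h1 - N*h3 - N*h4 + 2*N*A + 2*N*C
    have H : y 0 + 3 * y 1 = 0 := by
      have h2N : (2 * N : ℂ) ≠ 0 := by simp [hN]
      exact (mul_eq_zero.mp G2).resolve_left h2N
    have g0 : y 0 = -(1/4 : ℂ) := by linear_combination (G1 - t*H) / 2
    have g1 : y 1 = (1/12 : ℂ) := by linear_combination (H - g0) / 3
    have g2 : y 2 = (1/4 : ℂ) := by linear_combination B - g0
    have g3 : y 3 = -(1/12 : ℂ) := by linear_combination A - g1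
    have g4 : y 4 = (1/6 : ℂ) := by linear_combination C - g0 - g1
    have g5 : y 5 = -(1/4 : ℂ) := by linear_combination g0 - h0
    have g6 : y 6 = (1/12 : ℂ) := by linear_combination g1 - h1
    have g7 : y 7 = (1/4 : ℂ) := by linear_combination g2 - h2
    have g8 : y 8 = -(1/12 : ℂ) := by linear_combination g3 - h3
    have g9 : y 9 = (1/6 : ℂ) := by linear_combination g4 - h4
    funext i
    fin_cases i
    · exact g0
    · exact g1
    · exact g2
    · exact g3
    · exact g4
    · exact g5
    · exact g6
    · exact g7
    · exact g8
    · exact g9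

private lemma keyB (t N : ℂ) (hN : N ≠ 0) :
    ∃! y : Fin 10 → ℂ,
      (!![1,0,0,0,0,-1,0,0,0,0; 0,1,0,0,0,0,-1,0,0,0; 0,0,1,0,0,0,0,-1,0,0;
          0,0,0,1,0,0,0,0,-1,0; 0,0,0,0,1,0,0,0,0,-1; 0,1,0,1,0,0,1,0,1,0;
          1,-1,1,-1,0,1,-1,1,-1,0; 1,1,-1,-1,2,1,1,-1,-1,2] :
          Matrix (Fin 8) (Fin 10) ℂ).mulVec y = 0 ∧
      (∑ i, y i * (![-1,-t,1,t,t,-1,-t,1,t,t] : Fin 10 → ℂ) i) = 0 ∧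
      (∑ i, y i * (N * (![0,1,0,-1,-1,0,1,0,-1,-1] : Fin 10 → ℂ) i)) = 1 := by
  refine ⟨![-t/(4*N), (2+t)/(12*N), t/(4*N), -(2+t)/(12*N), (t-1)/(6*N),
            -t/(4*N), (2+t)/(12*N), t/(4*N), -(2+t)/(12*N), (t-1)/(6*N)], ⟨?_, ?_, ?_⟩, ?_⟩
  · funext i
    rw [mv_apply]
    fin_cases i <;>
      · simp only [Matrix.of_apply, c8_0, c8_1, c8_2, c8_3, c8_4, c8_5, c8_6, c8_7,
          c8m_0, c8m_1, c8m_2, c8m_3, c8m_4, c8m_5, c8m_6, c8m_7,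
          c10_0, c10_1, c10_2, c10_3, c10_4, c10_5, c10_6, c10_7, c10_8, c10_9, Pi.zero_apply]
        ring
  · rw [sum_univ_ten']
    simp only [c10_0, c10_1, c10_2, c10_3, c10_4, c10_5, c10_6, c10_7, c10_8, c10_9]
    ring
  · rw [sum_univ_ten']
    simp only [c10_0, c10_1, c10_2, c10_3, c10_4, c10_5, c10_6, c10_7, c10_8, c10_9]
    linear_combination mul_inv_cancel₀ hN
  · rintro y ⟨hM, hd1, hd2⟩
    have h0 := congrFun hM 0
    have h1 := congrFun hM 1
    have h2 := congrFun hM 2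
    have h3 := congrFun hM 3
    have h4 := congrFun hM 4
    have h5 := congrFun hM 5
    have h6 := congrFun hM 6
    have h7 := congrFun hM 7
    rw [mv_apply] at h0 h1 h2 h3 h4 h5 h6 h7
    simp only [Matrix.of_apply, c8_0, c8_1, c8_2, c8_3, c8_4, c8_5, c8_6, c8_7,
      c10_0, c10_1, c10_2, c10_3, c10_4, c10_5, c10_6, c10_7, c10_8, c10_9,
      Pi.zero_apply] at h0 h1 h2 h3 h4 h5 h6 h7
    rw [sum_univ_ten'] at hd1 hd2
    simp only [c10_0, c10_1, c10_2, c10_3, c10_4, c10_5, c10_6, c10_7, c10_8, c10_9] at hd1 hd2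
    have A : y 1 + y 3 = 0 := by linear_combination (h5 + h1 + h3) / 2
    have B : y 0 + y 2 = 0 := by linear_combination (h6 + h0 + h2 - h1 - h3) / 2 + A
    have C : y 0 + y 1 + y 4 = 0 := by
      linear_combination (h7 + h0 + h1 - h2 - h3 + 2*h4 + 2*A + 2*B) / 4
    have G1 : (2 + t) * y 0 + 3 * t * y 1 = 0 := by
      linear_combination (-hd1 + h0 + t*h1 - h2 - t*h3 - t*h4 + 2*B + 2*t*A + 2*t*C) / 2
    have G2 : 2 * N * (y 0 + 3 * y 1) = 1 := by
      linear_combination hd2 + N*h1 - N*h3 - N*h4 + 2*N*A + 2*N*C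
    have p0 : 4 * N * y 0 = -t := by linear_combination 2*N*G1 - t*G2
    have p1 : 12 * N * y 1 = 2 + t := by linear_combination 2*G2 - p0
    have g0 : y 0 = -t/(4*N) := by field_simp; linear_combination p0
    have g1 : y 1 = (2+t)/(12*N) := by field_simp; linear_combination p1
    have g2 : y 2 = t/(4*N) := by field_simp; linear_combination 4*N*B - p0
    have g3 : y 3 = -(2+t)/(12*N) := by field_simp; linear_combination 12*N*A - p1
    have g4 : y 4 = (t-1)/(6*N) := by
      field_simp
      linear_combination 6*N*C - (3/2)*p0 - (1/2)*p1
    have g5 : y 5 = -t/(4*N) := by linear_combination g0 - h0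
    have g6 : y 6 = (2+t)/(12*N) := by linear_combination g1 - h1
    have g7 : y 7 = t/(4*N) := by linear_combination g2 - h2
    have g8 : y 8 = -(2+t)/(12*N) := by linear_combination g3 - h3
    have g9 : y 9 = (t-1)/(6*N) := by linear_combination g4 - h4
    funext i
    fin_cases i
    · exact g0
    · exact g1
    · exact g2
    · exact g3
    · exact g4
    · exact g5
    · exact g6
    · exact g7
    · exact g8
    · exact g9

end

/-- Existence and uniqueness of the one-mass master contours M1, M2: weight vectors
satisfying the eight contour constraints and normalized against the residue vectors
R1 = (−1,−t,1,t,t,−1,−t,1,t,t), R2 = N(0,1,0,−1,−1,0,1,0,−1,−1), where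
t = χs/(m² − (1+χ)s) and N = χs²/(2(m² − (1+χ)s)). -/
theorem stmt_14 (s χ msq : ℂ) (hs : s ≠ 0) (hχ : χ ≠ 0)
    (hm : msq ≠ (1 + χ) * s)
    (t N : ℂ)
    (htdef : t = χ * s / (msq - (1 + χ) * s))
    (hNdef : N = χ * s ^ 2 / (2 * (msq - (1 + χ) * s)))
    (ht : t ≠ 0) (hN : N ≠ 0) :
    let M : Matrix (Fin 8) (Fin 10) ℂ :=
      !![1,0,0,0,0,-1,0,0,0,0;
         0,1,0,0,0,0,-1,0,0,0;
         0,0,1,0,0,0,0,-1,0,0;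
         0,0,0,1,0,0,0,0,-1,0;
         0,0,0,0,1,0,0,0,0,-1;
         0,1,0,1,0,0,1,0,1,0;
         1,-1,1,-1,0,1,-1,1,-1,0;
         1,1,-1,-1,2,1,1,-1,-1,2]
    let R1 : Fin 10 → ℂ := ![-1, -t, 1, t, t, -1, -t, 1, t, t]
    let R2 : Fin 10 → ℂ := fun i => N * ![0, 1, 0, -1, -1, 0, 1, 0, -1, -1] i
    let dot : (Fin 10 → ℂ) → (Fin 10 → ℂ) → ℂ := fun x y => ∑ i, x i * y i
    (∃! M1 : Fin 10 → ℂ, M.mulVec M1 = 0 ∧ dot M1 R1 = 1 ∧ dot M1 R2 = 0) ∧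
    (∃! M2 : Fin 10 → ℂ, M.mulVec M2 = 0 ∧ dot M2 R1 = 0 ∧ dot M2 R2 = 1) := by
  exact ⟨keyA t N hN, keyB t N hN⟩
end
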